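/- Let G be a u×u matrix, λ > 0 and n ≥ 1. Define the u×(u+n) matrix W whose first u×u block equals (I + G/λ)^n and whose j-th additional column (j = 1,…,n) equals (I + G/λ)^{n−j}·(−G𝟙/λ). Let B be the (u+n)×(u+n) block matrix with G in the top-left u×u block, −G𝟙 as the column immediately to its right, an Erlang tail of n states with diagonal −λ and superdiagonal λ, and zeros elsewhere. Then G·W = W·B and W·𝟙_{u+n} = 𝟙_u. -/

import Mathlib

open Matrix

/-- The explicit transformation matrix `W` to the Erlang-tail extension `B` of `G`
satisfies `G W = W B` and `W 𝟙 = 𝟙`. -/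
theorem stmt10 (u n : ℕ) (hn : 0 < n) (G : Matrix (Fin u) (Fin u) ℝ) (lam : ℝ)
    (hlam : 0 < lam)
    (W : Matrix (Fin u) (Fin u ⊕ Fin n) ℝ)
    (hW : W = Matrix.fromCols ((1 + lam⁻¹ • G) ^ n)
      (Matrix.of fun i (j : Fin n) =>
        (((1 + lam⁻¹ • G) ^ (n - 1 - (j : ℕ))) *ᵥ (-(lam⁻¹) • (G *ᵥ fun _ => 1))) i))
    (B : Matrix (Fin u ⊕ Fin n) (Fin u ⊕ Fin n) ℝ)
    (hB : B = Matrix.fromBlocks G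
      (Matrix.of fun (i : Fin u) (j : Fin n) =>
        if (j : ℕ) = 0 then (-(G *ᵥ fun _ => 1)) i else 0)
      0
      (Matrix.of fun i j : Fin n =>
        if i = j then -lam else if (j : ℕ) = (i : ℕ) + 1 then lam else 0)) :
    G * W = W * B ∧ W *ᵥ (fun _ => 1) = fun _ => 1 := by
  have hlam0 : lam ≠ 0 := ne_of_gt hlam
  set A : Matrix (Fin u) (Fin u) ℝ := 1 + lam⁻¹ • G with hA
  set one : Fin u → ℝ := (fun _ => 1) with hone
  set c : Fin u → ℝ := -(lam⁻¹) • (G *ᵥ one) with hc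
  have hcomm : ∀ k : ℕ, G * A ^ k = A ^ k * G := by
    intro k
    refine (Commute.pow_right ?_ k).eq
    show G * A = A * G
    simp [hA, mul_add, add_mul, Matrix.mul_smul, Matrix.smul_mul]
  have hstep : ∀ p : ℕ, A ^ (p + 1) = A ^ p + lam⁻¹ • (G * A ^ p) := by
    intro p
    rw [pow_succ', hA, add_mul, one_mul, Matrix.smul_mul]
  have hvec : ∀ p : ℕ, lam • (A ^ (p+1) *ᵥ c) - lam • (A ^ p *ᵥ c) = G *ᵥ (A ^ p *ᵥ c) := by
    intro p
    rw [hstep p, Matrix.add_mulVec, Matrix.smul_mulVec, ← Matrix.mulVec_mulVec]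
    rw [smul_add, add_sub_cancel_left, smul_smul, mul_inv_cancel₀ hlam0, one_smul]
  constructor
  · subst hW hB
    rw [Matrix.mul_fromCols, Matrix.fromCols_mul_fromBlocks]
    refine congrArg₂ _ ?_ ?_
    · rw [Matrix.mul_zero, add_zero, hcomm n]
    · ext i j
      rcases j with ⟨jv, hj⟩
      rw [Matrix.mul_apply, Matrix.add_apply, Matrix.mul_apply, Matrix.mul_apply]
      cases jv with
      | zero =>
        simp only [Matrix.of_apply, Nat.sub_zero]
        have h1 : (∑ x : Fin u, (A ^ n) i x * if True then (-(G *ᵥ one)) x else 0)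
            = (A ^ n *ᵥ (-(G *ᵥ one))) i := by
          simp [Matrix.mulVec, dotProduct]
        have h2 : (∑ x : Fin n, (A ^ (n - 1 - (x : ℕ)) *ᵥ c) i *
              if x = (⟨0, hj⟩ : Fin n) then -lam else if 0 = (x : ℕ) + 1 then lam else 0)
            = (A ^ (n - 1) *ᵥ c) i * (-lam) := by
          rw [Finset.sum_eq_single (⟨0, hj⟩ : Fin n)]
          · simp
          · intro k _ hk
            have : ¬ ((0:ℕ) = (k : ℕ) + 1) := by omega
            simp [hk, this]
          · simp
        rw [h1, h2]
        have key : G *ᵥ (A ^ (n-1) *ᵥ c) = A ^ n *ᵥ (-(G *ᵥ one)) + (-lam) • (A ^ (n-1) *ᵥ c) := by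
          have hv := hvec (n - 1)
          rw [Nat.sub_add_cancel hn] at hv
          rw [← hv]
          have hlc : lam • (A ^ n *ᵥ c) = A ^ n *ᵥ (-(G *ᵥ one)) := by
            rw [← Matrix.mulVec_smul, hc]
            rw [smul_smul, show lam * -lam⁻¹ = -1 by field_simp, neg_one_smul]
          rw [hlc, neg_smul]
          abel
        have hkey := congrFun key i
        simp only [Pi.add_apply, Pi.smul_apply, smul_eq_mul] at hkey
        rw [show ∑ x : Fin u, G i x * (A ^ (n - 1) *ᵥ c) x = (G *ᵥ (A ^ (n-1) *ᵥ c)) i from rfl]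
        rw [hkey]; ring
      | succ m =>
        have hm : m < n := Nat.lt_of_succ_lt hj
        simp only [Matrix.of_apply]
        have h1 : (∑ x : Fin u, (A ^ n) i x * if m + 1 = 0 then (-(G *ᵥ one)) x else 0) = 0 := by
          simp
        have hsplit : ∀ k : Fin n,
            (if k = (⟨m+1, hj⟩ : Fin n) then -lam else if m + 1 = (k : ℕ) + 1 then lam else 0)
            = (if k = (⟨m+1, hj⟩ : Fin n) then -lam else 0)
              + (if k = (⟨m, hm⟩ : Fin n) then lam else 0) := by
          intro k
          rcases k with ⟨kv, hk⟩
          by_cases h : kv = m + 1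
          · subst h
            simp [Fin.ext_iff]
          · by_cases h' : kv = m
            · subst h'
              simp [Fin.ext_iff, h]
            · have hne : ¬ (m + 1 = kv + 1) := by omega
              simp [Fin.ext_iff, h, h', hne, Ne.symm h']
        have h2 : (∑ x : Fin n, (A ^ (n - 1 - (x : ℕ)) *ᵥ c) i *
              if x = (⟨m+1, hj⟩ : Fin n) then -lam else if m + 1 = (x : ℕ) + 1 then lam else 0)
            = (A ^ (n - 1 - (m+1)) *ᵥ c) i * (-lam) + (A ^ (n - 1 - m) *ᵥ c) i * lam := by
          simp only [hsplit, mul_add]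
          rw [Finset.sum_add_distrib]
          congr 1
          · rw [Finset.sum_eq_single (⟨m+1, hj⟩ : Fin n)]
            · simp
            · intro k _ hk; simp [hk]
            · simp
          · rw [Finset.sum_eq_single (⟨m, hm⟩ : Fin n)]
            · simp
            · intro k _ hk; simp [hk]
            · simp
        rw [h1, h2, zero_add]
        set p := n - 1 - (m+1) with hp
        have hp1 : n - 1 - m = p + 1 := by omega
        rw [hp1]
        have hkey := congrFun (hvec p) i
        simp only [Pi.sub_apply, Pi.smul_apply, smul_eq_mul] at hkey
        rw [show ∑ x : Fin u, G i x * (A ^ (n - 1 - (m+1)) *ᵥ c) x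
            = (G *ᵥ (A ^ p *ᵥ c)) i from rfl]
        rw [← hkey]; ring
  · subst hW
    set onen : Fin n → ℝ := (fun _ => 1) with honen
    have hone' : ((fun _ => (1:ℝ)) : Fin u ⊕ Fin n → ℝ) = Sum.elim one onen := by
      funext x; cases x <;> rfl
    rw [hone', Matrix.fromCols_mulVec_sumElim]
    have hCone : (Matrix.of fun i (j : Fin n) => (A ^ (n - 1 - (j : ℕ)) *ᵥ c) i) *ᵥ onen
        = (∑ k ∈ Finset.range n, A ^ k) *ᵥ c := by
      funext i
      show ∑ j : Fin n, (A ^ (n - 1 - (j : ℕ)) *ᵥ c) i * onen j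
          = ∑ j : Fin u, (∑ k ∈ Finset.range n, A ^ k) i j * c j
      simp only [honen, mul_one, Matrix.sum_apply, Finset.sum_mul]
      rw [Finset.sum_comm]
      rw [← Fin.sum_univ_eq_sum_range (fun k => ∑ j, (A ^ k) i j * c j)]
      rw [show (∑ j : Fin n, (A ^ (n - 1 - (j : ℕ)) *ᵥ c) i)
          = ∑ j ∈ Finset.range n, (A ^ (n - 1 - j) *ᵥ c) i from
        Fin.sum_univ_eq_sum_range (fun j => (A ^ (n - 1 - j) *ᵥ c) i) n]
      rw [Finset.sum_range_reflect (fun j => (A ^ j *ᵥ c) i) n]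
      rw [← Fin.sum_univ_eq_sum_range (fun j => (A ^ j *ᵥ c) i)]
      rfl
    rw [hCone]
    have hA1 : A - 1 = lam⁻¹ • G := by rw [hA]; abel
    have hc2 : c = (-(lam⁻¹ • G)) *ᵥ one := by
      rw [hc, Matrix.neg_mulVec, Matrix.smul_mulVec, neg_smul]
    rw [hc2, Matrix.mulVec_mulVec, Matrix.mul_neg, ← hA1, geom_sum_mul, ← Matrix.add_mulVec]
    rw [neg_sub]
    have hfin : A ^ n + (1 - A ^ n) = 1 := by abel
    rw [hfin, Matrix.one_mulVec]
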